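/- Let G = (S ∪ K, E) be a split graph with no isolated vertices, where S is an independent set and K is a clique, and assume K is a maximum clique of G, i.e., ω(G) = |K|. Then 1 ≤ Tr_t(G) ≤ ω(G) - 1. -/
import Mathlib


/-- A total transitive partition of `G` into `k` parts: the parts are nonempty, they
partition the vertex set, and `V_i` dominates `V_j` for all `i ≤ j`. -/
def TTPartition {V : Type*} (G : SimpleGraph V) (k : ℕ) (P : Fin k → Set V) : Prop :=
  (∀ i, (P i).Nonempty) ∧
  (∀ v : V, ∃! i, v ∈ P i) ∧
  (∀ i j : Fin k, i ≤ j → ∀ v ∈ P j, ∃ u ∈ P i, G.Adj u v)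

/-- Let `G` be a split graph without isolated vertices, with vertex set partitioned into
an independent set `S` and a clique `K`, where `K` is a maximum clique (`ω(G) = |K|`).
Then `1 ≤ Tr_t(G) ≤ ω(G) - 1`. -/
theorem stmt11 {V : Type*} [Fintype V] [Nonempty V] (G : SimpleGraph V)
    (S K : Set V) (hdisj : Disjoint S K) (hcover : S ∪ K = Set.univ)
    (hS : ∀ u ∈ S, ∀ v ∈ S, ¬ G.Adj u v)
    (hK : G.IsClique K)
    (hmax : ∀ C : Set V, G.IsClique C → C.ncard ≤ K.ncard)
    (hiso : ∀ v : V, ∃ u : V, G.Adj v u) :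
    (∃ P : Fin 1 → Set V, TTPartition G 1 P) ∧
      (∀ k : ℕ, (∃ P : Fin k → Set V, TTPartition G k P) → k ≤ K.ncard - 1) := by
  have hmemSK : ∀ v : V, v ∉ K → v ∈ S := by
    intro v hv
    have : v ∈ S ∪ K := hcover ▸ Set.mem_univ v
    exact this.resolve_right hv
  constructor
  · refine ⟨fun _ => Set.univ, fun _ => Set.univ_nonempty,
      fun v => ⟨0, trivial, fun i _ => Subsingleton.elim i 0⟩, ?_⟩
    intro i j _ v _
    obtain ⟨u, hu⟩ := hiso v
    exact ⟨u, trivial, hu.symm⟩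
  · rintro k ⟨P, hne, huniq, hdom⟩
    rcases Nat.eq_zero_or_pos k with rfl | hk
    · omega
    have hmeet : ∀ i : Fin k, ∃ x, x ∈ P i ∧ x ∈ K := by
      intro i
      obtain ⟨v, hv⟩ := hne i
      by_cases hvK : v ∈ K
      · exact ⟨v, hv, hvK⟩
      · obtain ⟨u, hu, hadj⟩ := hdom i i le_rfl v hv
        refine ⟨u, hu, ?_⟩
        by_contra h
        exact hS u (hmemSK u h) v (hmemSK v hvK) hadj
    choose w hwP hwK using hmeet
    have hdisjP : ∀ {v : V} {i j : Fin k}, v ∈ P i → v ∈ P j → i = j := by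
      intro v i j hi hj
      obtain ⟨l, _, hl⟩ := huniq v
      exact (hl i hi).trans (hl j hj).symm
    have hwinj : Function.Injective w := fun i j h => hdisjP (h ▸ hwP i) (hwP j)
    have hrange : Set.range w ⊆ K := by rintro _ ⟨i, rfl⟩; exact hwK i
    have hrangefin : (Set.range w).Finite := Set.finite_range w
    have hcardrange : (Set.range w).ncard = k := by
      rw [← Set.image_univ, Set.ncard_image_of_injective _ hwinj, Set.ncard_univ]
      simp
    suffices h : k + 1 ≤ K.ncard by omega
    by_cases hA : ∃ i, ∃ x ∈ P i, x ∈ K ∧ x ≠ w i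
    · obtain ⟨i, x, hxP, hxK, hxne⟩ := hA
      have hxnr : x ∉ Set.range w := by
        rintro ⟨j, rfl⟩
        exact hxne (congrArg w (hdisjP hxP (hwP j)) ▸ rfl)
      calc k + 1 = (insert x (Set.range w)).ncard := by
            rw [Set.ncard_insert_of_notMem hxnr hrangefin, hcardrange]
        _ ≤ K.ncard := Set.ncard_le_ncard (Set.insert_subset hxK hrange) (Set.toFinite K)
    · push_neg at hA
      set l : Fin k := ⟨k - 1, by omega⟩ with hl
      have hle : ∀ i : Fin k, i ≤ l := by
        intro i
        have := i.isLt
        simp only [Fin.le_def, hl]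
        omega
      obtain ⟨u, huP, huadj⟩ := hdom l l le_rfl (w l) (hwP l)
      have huS : u ∈ S := by
        apply hmemSK
        intro huK
        exact huadj.ne (hA l u huP huK)
      have hadjall : ∀ i : Fin k, G.Adj (w i) u := by
        intro i
        obtain ⟨t, htP, htadj⟩ := hdom i l (hle i) u huP
        have htK : t ∈ K := by
          by_contra h
          exact hS t (hmemSK t h) u huS htadj
        exact hA i t htP htK ▸ htadj
      have hunr : u ∉ Set.range w := fun hu =>
        hdisj.ne_of_mem huS (hrange hu) rfl
      have hclique : G.IsClique (insert u (Set.range w)) := by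
        intro x hx y hy hxy
        rcases hx with rfl | hx
        · rcases hy with rfl | hy
          · exact absurd rfl hxy
          · obtain ⟨i, rfl⟩ := hy
            exact (hadjall i).symm
        · rcases hy with rfl | hy
          · obtain ⟨i, rfl⟩ := hx
            exact hadjall i
          · exact hK (hrange hx) (hrange hy) hxy
      calc k + 1 = (insert u (Set.range w)).ncard := by
            rw [Set.ncard_insert_of_notMem hunr hrangefin, hcardrange]
        _ ≤ K.ncard := hmax _ hclique
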